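/- Let B ⊆ Kⁿ be a ball, Ū ⊆ K̄ⁿ a K̄-subspace of dimension d, and π : Kⁿ → K^d a coordinate projection which is an exhibition of Ū. For q ∈ π(B) write B_q := B ∩ π⁻¹(q). Suppose (α_{q,q'})_{q,q' ∈ π(B)} is a family of risometries α_{q,q'} : B_q → B_{q'} satisfying α_{q',q''} ∘ α_{q,q'} = α_{q,q''} for all q, q', q'' ∈ π(B), and dir(α_{q,q'}(z) − z) ⊆ Ū for all q, q' ∈ π(B) and z ∈ B_q. Then for every δ ∈ π(B) − π(B) (the translate of π(B) containing 0), the map B → B sending x to α_{π(x), π(x)+δ}(x) is a risometry. -/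

import Mathlib

noncomputable section

open scoped Classical Pointwise

section Preamble

variable {K : Type*} [Field K] {Γ : Type*} [LinearOrderedCommGroupWithZero Γ]

instance (priority := 100) : OrderBot Γ where
  bot := 0
  bot_le _ := zero_le'

/-- The max-valuation on `K^n`: `v(a) = maxᵢ v(aᵢ)`. -/
def vv (v : Valuation K Γ) {n : ℕ} (x : Fin n → K) : Γ :=
  Finset.univ.sup fun i => v (x i)

/-- `rvEq v x y` expresses `rv(x) = rv(y)` in `RV⁽ⁿ⁾ = Kⁿ/∼`, where
`x ∼ y` iff `v(x−y) < v(x)` or `x = y = 0`. -/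
def rvEq (v : Valuation K Γ) {n : ℕ} (x y : Fin n → K) : Prop :=
  vv v (x - y) < vv v x ∨ (x = 0 ∧ y = 0)

/-- Balls in `K` (with `K` itself counting as a ball). -/
def IsBall1 (v : Valuation K Γ) (B : Set K) : Prop :=
  B = Set.univ ∨ ∃ a : K, ∃ γ : Γ, γ ≠ 0 ∧
    (B = {x | v (x - a) < γ} ∨ B = {x | v (x - a) ≤ γ})

/-- Balls in `Kⁿ` (with `Kⁿ` itself counting as a ball). -/
def IsBall (v : Valuation K Γ) {n : ℕ} (B : Set (Fin n → K)) : Prop :=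
  B = Set.univ ∨ ∃ a : Fin n → K, ∃ γ : Γ, γ ≠ 0 ∧
    (B = {x | vv v (x - a) < γ} ∨ B = {x | vv v (x - a) ≤ γ})

/-- Spherical completeness: every nonempty chain of balls in `K` has nonempty
intersection. -/
def SphericallyComplete (v : Valuation K Γ) : Prop :=
  ∀ C : Set (Set K), C.Nonempty → (∀ B ∈ C, IsBall1 v B) → IsChain (· ⊆ ·) C →
    (⋂ B ∈ C, B).Nonempty

/-- The residue field `K̄` of the valuation ring `𝒪 = {x | v x ≤ 1}`. -/
def Kbar (v : Valuation K Γ) : Type _ :=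
  IsLocalRing.ResidueField v.valuationSubring

instance (v : Valuation K Γ) : Field (Kbar v) :=
  inferInstanceAs (Field (IsLocalRing.ResidueField v.valuationSubring))

/-- The residue map `res : 𝒪 → K̄`, extended by the junk value `0` outside `𝒪`. -/
def res' (v : Valuation K Γ) (x : K) : Kbar v :=
  if h : v x ≤ 1 then IsLocalRing.residue v.valuationSubring ⟨x, h⟩ else 0

/-- The coordinatewise residue map on `Kⁿ`. -/
def resv (v : Valuation K Γ) {n : ℕ} (x : Fin n → K) : Fin n → Kbar v :=
  fun i => res' v (x i)

/-- `res(S)` for a set `S ⊆ Kⁿ`: the set of residues of points of `S ∩ 𝒪ⁿ`. -/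
def resSet (v : Valuation K Γ) {n : ℕ} (S : Set (Fin n → K)) : Set (Fin n → Kbar v) :=
  resv v '' {x ∈ S | ∀ i, v (x i) ≤ 1}

/-- `dir(x) = res(K·x) ⊆ K̄ⁿ`. -/
def dirSet (v : Valuation K Γ) {n : ℕ} (x : Fin n → K) : Set (Fin n → Kbar v) :=
  resSet v {y | ∃ c : K, y = c • x}

/-- The coordinate projection `Kⁿ → K^d` selecting the coordinates `σ 0 < σ 1 < ⋯`. -/
def proj {A : Type*} {n d : ℕ} (σ : Fin d → Fin n) (x : Fin n → A) : Fin d → A :=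
  fun k => x (σ k)

/-- `σ` (a strictly increasing selection of `d` of the `n` coordinates) is an
exhibition of the `K̄`-subspace `Ū ⊆ K̄ⁿ` if the corresponding coordinate projection
`K̄ⁿ → K̄^d` restricts to an isomorphism from `Ū` onto `K̄^d`. -/
def IsExhibition (v : Valuation K Γ) {n d : ℕ} (σ : Fin d → Fin n)
    (Ubar : Submodule (Kbar v) (Fin n → Kbar v)) : Prop :=
  StrictMono σ ∧ Set.BijOn (proj σ) (Ubar : Set (Fin n → Kbar v)) Set.univ

/-- `affdir(C)`: the `K̄`-subspace of `K̄ⁿ` generated by all `dir(x − x')`, `x, x' ∈ C`. -/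
def affdir (v : Valuation K Γ) {n : ℕ} (C : Set (Fin n → K)) :
    Submodule (Kbar v) (Fin n → Kbar v) :=
  Submodule.span (Kbar v) (⋃ x ∈ C, ⋃ x' ∈ C, dirSet v (x - x'))

/-- A matrix has entries in the valuation ring `𝒪`. -/
def EntriesInO (v : Valuation K Γ) {n : ℕ} (M : Matrix (Fin n) (Fin n) K) : Prop :=
  ∀ i j, v (M i j) ≤ 1

/-- `M ∈ GLₙ(𝒪)`: `M` is invertible, with entries in `𝒪`, and its inverse also has
entries in `𝒪`. -/
def MemGLO (v : Valuation K Γ) {n : ℕ} (M : Matrix (Fin n) (Fin n) K) : Prop :=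
  EntriesInO v M ∧ ∃ N : Matrix (Fin n) (Fin n) K,
    M * N = 1 ∧ N * M = 1 ∧ EntriesInO v N

/-- The entrywise residue matrix of `M`. -/
def resM (v : Valuation K Γ) {n : ℕ} (M : Matrix (Fin n) (Fin n) K) :
    Matrix (Fin n) (Fin n) (Kbar v) :=
  fun i j => res' v (M i j)

/-- `DeltaLE v U W γ` expresses `Δ(U, W) ≤ γ`: for every `u ∈ U` there is `w ∈ W`
with `v(u − w) ≤ v(u)·γ`. -/
def DeltaLE (v : Valuation K Γ) {n : ℕ} (U W : Submodule K (Fin n → K)) (γ : Γ) : Prop :=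
  ∀ u ∈ U, ∃ w ∈ W, vv v (u - w) ≤ vv v u * γ

/-- `IsDelta v U W γ` expresses `Δ(U, W) = γ`: `γ` is the minimum of all admissible
bounds. -/
def IsDelta (v : Valuation K Γ) {n : ℕ} (U W : Submodule K (Fin n → K)) (γ : Γ) : Prop :=
  DeltaLE v U W γ ∧ ∀ δ : Γ, DeltaLE v U W δ → γ ≤ δ

end Preamble

variable {K : Type*} [Field K] {Γ : Type*} [LinearOrderedCommGroupWithZero Γ]


section Aux

variable (v : Valuation K Γ) {m n d : ℕ}

lemma vv_coord_le (x : Fin m → K) (i : Fin m) : v (x i) ≤ vv v x := by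
  unfold vv
  exact Finset.le_sup (f := fun i => v (x i)) (Finset.mem_univ i)

lemma vv_zero : vv v (0 : Fin m → K) = 0 := by
  refine le_antisymm (Finset.sup_le fun i _ => ?_) zero_le'
  simp

lemma vv_eq_zero {x : Fin m → K} : vv v x = 0 ↔ x = 0 := by
  constructor
  · intro h; funext i
    have h1 := vv_coord_le v x i
    rw [h] at h1
    have : v (x i) = 0 := le_antisymm h1 zero_le'
    simpa using this
  · rintro rfl; exact vv_zero v

lemma vv_add_le (x y : Fin m → K) : vv v (x + y) ≤ max (vv v x) (vv v y) := by
  refine Finset.sup_le fun i _ => ?_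
  exact le_trans (v.map_add (x i) (y i))
    (max_le_max (vv_coord_le v x i) (vv_coord_le v y i))

lemma vv_neg (x : Fin m → K) : vv v (-x) = vv v x := by
  unfold vv; congr 1; funext i; simp

lemma vv_sub_le (x y : Fin m → K) : vv v (x - y) ≤ max (vv v x) (vv v y) := by
  rw [sub_eq_add_neg]
  simpa [vv_neg] using vv_add_le v x (-y)

lemma vv_eq_of_sub_lt {x y : Fin m → K} (h : vv v (x - y) < vv v x) :
    vv v y = vv v x := by
  apply le_antisymm
  · calc vv v y = vv v (x - (x - y)) := by rw [sub_sub_cancel]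
      _ ≤ max (vv v x) (vv v (x - y)) := vv_sub_le v _ _
      _ = vv v x := max_eq_left h.le
  · by_contra hc
    push_neg at hc
    have h2 : vv v x ≤ max (vv v (x - y)) (vv v y) := by
      calc vv v x = vv v ((x - y) + y) := by rw [sub_add_cancel]
        _ ≤ _ := vv_add_le v _ _
    exact absurd h2 (not_le.mpr (max_lt h hc))

lemma rvEq_vv {x y : Fin m → K} (h : rvEq v x y) : vv v x = vv v y := by
  rcases h with h | ⟨rfl, rfl⟩
  · exact (vv_eq_of_sub_lt v h).symm
  · rfl

lemma exists_vv_coord {x : Fin m → K} (hx : x ≠ 0) : ∃ i, v (x i) = vv v x := by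
  have hne : (Finset.univ : Finset (Fin m)).Nonempty := by
    rcases Function.ne_iff.mp hx with ⟨i, _⟩
    exact ⟨i, Finset.mem_univ i⟩
  obtain ⟨i, _, h⟩ := Finset.exists_mem_eq_sup Finset.univ hne fun i => v (x i)
  exact ⟨i, h.symm⟩

lemma proj_sub (σ : Fin d → Fin n) (x y : Fin n → K) :
    proj σ (x - y) = proj σ x - proj σ y := rfl

lemma proj_add (σ : Fin d → Fin n) (x y : Fin n → K) :
    proj σ (x + y) = proj σ x + proj σ y := rfl

lemma vv_proj_le (σ : Fin d → Fin n) (x : Fin n → K) :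
    vv v (proj σ x) ≤ vv v x :=
  Finset.sup_le fun k _ => vv_coord_le v x (σ k)

lemma res'_def {x : K} (h : v x ≤ 1) :
    res' v x = IsLocalRing.residue v.valuationSubring ⟨x, h⟩ := dif_pos h

lemma res'_sub {x y : K} (hx : v x ≤ 1) (hy : v y ≤ 1) :
    res' v (x - y) = res' v x - res' v y := by
  have hxy : v (x - y) ≤ 1 := le_trans (v.map_sub x y) (max_le hx hy)
  rw [res'_def v hxy, res'_def v hx, res'_def v hy]
  exact map_sub (IsLocalRing.residue v.valuationSubring) ⟨x, hx⟩ ⟨y, hy⟩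

lemma res'_ne_zero {x : K} (h : v x = 1) : res' v x ≠ 0 := by
  rw [res'_def v h.le]
  change ¬ (IsLocalRing.residue v.valuationSubring (⟨x, h.le⟩ : v.valuationSubring) =
    (0 : IsLocalRing.ResidueField v.valuationSubring))
  rw [IsLocalRing.residue_eq_zero_iff,
    IsLocalRing.mem_maximalIdeal, mem_nonunits_iff, not_not]
  have hx0 : x ≠ 0 := by
    intro h0; rw [h0, map_zero] at h; exact zero_ne_one h
  have hinv : v x⁻¹ ≤ 1 := by rw [map_inv₀, h, inv_one]
  refine IsUnit.of_mul_eq_one (⟨x⁻¹, hinv⟩ : v.valuationSubring) ?_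
  ext
  simpa using mul_inv_cancel₀ hx0

lemma res'_eq_zero_of_lt {x : K} (h : v x < 1) : res' v x = 0 := by
  rw [res'_def v h.le]
  change IsLocalRing.residue v.valuationSubring (⟨x, h.le⟩ : v.valuationSubring) =
    (0 : IsLocalRing.ResidueField v.valuationSubring)
  rw [IsLocalRing.residue_eq_zero_iff,
    IsLocalRing.mem_maximalIdeal, mem_nonunits_iff]
  intro hu
  obtain ⟨b, hb⟩ := hu.exists_right_inv
  have hb' : x * (b : K) = 1 := by
    have := congrArg (fun z : v.valuationSubring => (z : K)) hb
    simpa using this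
  have h1 : v x * v (b : K) = 1 := by rw [← v.map_mul, hb', v.map_one]
  have h2 : v x * v (b : K) ≤ v x * 1 := mul_le_mul_right b.2 _
  rw [h1, mul_one] at h2
  exact absurd h (not_lt.mpr h2)

lemma inv_mul_le_one' {a b : Γ} (ha : a ≠ 0) (h : b ≤ a) : a⁻¹ * b ≤ 1 := by
  calc a⁻¹ * b ≤ a⁻¹ * a := mul_le_mul_right h _
    _ = 1 := inv_mul_cancel₀ ha

lemma exhibition_vv_proj {σ : Fin d → Fin n} {Ubar : Submodule (Kbar v) (Fin n → Kbar v)}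
    (hσ : IsExhibition v σ Ubar) {u : Fin n → K}
    (hu : dirSet v u ⊆ (Ubar : Set (Fin n → Kbar v))) :
    vv v (proj σ u) = vv v u := by
  rcases eq_or_ne u 0 with rfl | hne
  · rw [show proj σ (0 : Fin n → K) = 0 from funext fun _ => rfl, vv_zero, vv_zero]
  refine le_antisymm (vv_proj_le v σ u) ?_
  obtain ⟨i, hi⟩ := exists_vv_coord v hne
  have hvv : vv v u ≠ 0 := fun h0 => hne ((vv_eq_zero v).mp h0)
  set c := (u i)⁻¹ with hc
  have hcv : v c = (vv v u)⁻¹ := by rw [hc, map_inv₀, hi]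
  have hcu : ∀ j, v ((c • u) j) ≤ 1 := by
    intro j
    have : v (c * u j) ≤ 1 := by
      rw [map_mul, hcv]
      exact inv_mul_le_one' hvv (vv_coord_le v u j)
    simpa using this
  have hmem : resv v (c • u) ∈ dirSet v u := ⟨c • u, ⟨⟨c, rfl⟩, hcu⟩, rfl⟩
  have hU : resv v (c • u) ∈ (Ubar : Set (Fin n → Kbar v)) := hu hmem
  have hci : v ((c • u) i) = 1 := by
    have : v (c * u i) = 1 := by rw [map_mul, hcv, hi]; exact inv_mul_cancel₀ hvv
    simpa using this
  have hne' : resv v (c • u) ≠ 0 := by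
    intro h0
    exact res'_ne_zero v hci (by simpa [resv] using congrFun h0 i)
  have hproj : proj σ (resv v (c • u)) ≠ 0 := by
    intro h0
    exact hne' (hσ.2.injOn hU (Submodule.zero_mem Ubar) h0)
  obtain ⟨k, hk⟩ := Function.ne_iff.mp hproj
  have h1 : v ((c • u) (σ k)) = 1 := by
    rcases lt_or_eq_of_le (hcu (σ k)) with hlt | heq
    · exact absurd (res'_eq_zero_of_lt v hlt) hk
    · exact heq
  have h2 : v (u (σ k)) = vv v u := by
    have h3 : v c * v (u (σ k)) = 1 := by
      rw [← map_mul]; simpa using h1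
    calc v (u (σ k)) = vv v u * ((vv v u)⁻¹ * v (u (σ k))) := by
          rw [← mul_assoc, mul_inv_cancel₀ hvv, one_mul]
      _ = vv v u := by rw [← hcv, h3, mul_one]
  calc vv v u = v (proj σ u k) := h2.symm
    _ ≤ vv v (proj σ u) := vv_coord_le v (proj σ u) k

lemma exhibition_dir_diff {σ : Fin d → Fin n} {Ubar : Submodule (Kbar v) (Fin n → Kbar v)}
    (hσ : IsExhibition v σ Ubar) {b b' : Fin n → K}
    (hb : dirSet v b ⊆ (Ubar : Set (Fin n → Kbar v)))
    (hb' : dirSet v b' ⊆ (Ubar : Set (Fin n → Kbar v)))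
    (hp : proj σ b = proj σ b') :
    b = b' ∨ vv v (b - b') < vv v b := by
  rcases eq_or_ne b b' with rfl | hne
  · exact Or.inl rfl
  right
  by_contra hge
  push_neg at hge
  have hbb' : b - b' ≠ 0 := sub_ne_zero.mpr hne
  have hvd : vv v (b - b') ≠ 0 := fun h0 => hbb' ((vv_eq_zero v).mp h0)
  obtain ⟨i, hi⟩ := exists_vv_coord v hbb'
  set c := ((b - b') i)⁻¹ with hc
  have hcv : v c = (vv v (b - b'))⁻¹ := by rw [hc, map_inv₀, hi]
  have hb'v : vv v b' = vv v b := by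
    rw [← exhibition_vv_proj v hσ hb', ← hp, exhibition_vv_proj v hσ hb]
  have hcb : ∀ j, v ((c • b) j) ≤ 1 := by
    intro j
    have : v (c * b j) ≤ 1 := by
      rw [map_mul, hcv]
      exact inv_mul_le_one' hvd (le_trans (vv_coord_le v b j) hge)
    simpa using this
  have hcb' : ∀ j, v ((c • b') j) ≤ 1 := by
    intro j
    have : v (c * b' j) ≤ 1 := by
      rw [map_mul, hcv]
      exact inv_mul_le_one' hvd (le_trans (vv_coord_le v b' j) (hb'v ▸ hge))
    simpa using this
  have hmb : resv v (c • b) ∈ (Ubar : Set (Fin n → Kbar v)) :=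
    hb ⟨c • b, ⟨⟨c, rfl⟩, hcb⟩, rfl⟩
  have hmb' : resv v (c • b') ∈ (Ubar : Set (Fin n → Kbar v)) :=
    hb' ⟨c • b', ⟨⟨c, rfl⟩, hcb'⟩, rfl⟩
  have hd : resv v (c • b) - resv v (c • b') = resv v (c • (b - b')) := by
    funext j
    have h1 : (c • (b - b')) j = (c • b) j - (c • b') j := by
      simp [mul_sub]
    show resv v (c • b) j - resv v (c • b') j = _
    rw [show resv v (c • (b - b')) j = res' v ((c • (b - b')) j) from rfl, h1,
      res'_sub v (hcb j) (hcb' j)]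
    rfl
  have hwU : resv v (c • (b - b')) ∈ Ubar := by
    rw [← hd]
    exact Submodule.sub_mem Ubar hmb hmb'
  have hpw : proj σ (resv v (c • (b - b'))) = 0 := by
    funext k
    have h0 : (b - b') (σ k) = 0 := by
      have := congrFun hp k
      simpa [proj, sub_eq_zero] using this
    show res' v ((c • (b - b')) (σ k)) = 0
    have : (c • (b - b')) (σ k) = 0 := by simp [h0]
    rw [this]
    exact res'_eq_zero_of_lt v (by rw [map_zero]; exact zero_lt_one)
  have hzero : resv v (c • (b - b')) = 0 := hσ.2.injOn hwU (Submodule.zero_mem Ubar) hpw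
  have hci : v ((c • (b - b')) i) = 1 := by
    have : v (c * (b - b') i) = 1 := by
      rw [map_mul, hcv, hi]; exact inv_mul_cancel₀ hvd
    simpa using this
  exact res'_ne_zero v hci (by simpa [resv] using congrFun hzero i)

def extend (σ : Fin d → Fin n) (a : Fin n → K) (q : Fin d → K) : Fin n → K :=
  fun i => if h : ∃ k, σ k = i then q h.choose else a i

lemma proj_extend {σ : Fin d → Fin n} (hinj : Function.Injective σ)
    (a : Fin n → K) (q : Fin d → K) : proj σ (extend σ a q) = q := by
  funext k
  have h : ∃ k', σ k' = σ k := ⟨k, rfl⟩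
  show (if h : ∃ k', σ k' = σ k then q h.choose else a (σ k)) = q k
  rw [dif_pos h]
  congr 1
  exact hinj h.choose_spec

lemma vv_extend_sub (σ : Fin d → Fin n) (a : Fin n → K) (q : Fin d → K) :
    vv v (extend σ a q - a) ≤ vv v (q - proj σ a) := by
  refine Finset.sup_le fun i _ => ?_
  show v (extend σ a q i - a i) ≤ _
  by_cases h : ∃ k, σ k = i
  · rw [show extend σ a q i = q h.choose from dif_pos h]
    have hs := h.choose_spec
    calc v (q h.choose - a i) = v ((q - proj σ a) h.choose) := by
          rw [Pi.sub_apply]; unfold proj; rw [hs]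
      _ ≤ _ := vv_coord_le v _ _
  · rw [show extend σ a q i = a i from dif_neg h, sub_self, map_zero]
    exact zero_le'

lemma vv_add_eq_max {σ : Fin d → Fin n} {a b : Fin n → K} (hpa : proj σ a = 0)
    (hb : vv v (proj σ b) = vv v b) :
    vv v (a + b) = max (vv v a) (vv v b) := by
  refine le_antisymm (vv_add_le v a b) ?_
  rcases le_or_gt (vv v a) (vv v b) with h | h
  · rw [max_eq_right h]
    calc vv v b = vv v (proj σ (a + b)) := by rw [proj_add, hpa, zero_add, hb]
      _ ≤ vv v (a + b) := vv_proj_le v σ _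
  · rw [max_eq_left h.le]
    by_contra hc
    push_neg at hc
    have h2 : vv v a ≤ max (vv v (a + b)) (vv v b) := by
      calc vv v a = vv v ((a + b) - b) := by rw [add_sub_cancel_right]
        _ ≤ _ := vv_sub_le v _ _
    exact absurd h2 (not_le.mpr (max_lt hc h))

lemma ball_closure {B : Set (Fin n → K)} (hB : IsBall v B) {σ : Fin d → Fin n}
    (hinj : Function.Injective σ) {q u w : Fin d → K}
    (hq : q ∈ proj σ '' B) (hu : u ∈ proj σ '' B) (hw : w ∈ proj σ '' B) :
    q + u - w ∈ proj σ '' B := by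
  rcases hB with rfl | ⟨a, γ, hγ, hB⟩
  · exact ⟨extend σ 0 (q + u - w), trivial, proj_extend hinj _ _⟩
  obtain ⟨xq, hxq, rfl⟩ := hq
  obtain ⟨xu, hxu, rfl⟩ := hu
  obtain ⟨xw, hxw, rfl⟩ := hw
  set t := proj σ xq + proj σ xu - proj σ xw with ht
  refine ⟨extend σ a t, ?_, proj_extend hinj _ _⟩
  have ht2 : t - proj σ a =
      proj σ (xq - a) + (proj σ (xu - a) - proj σ (xw - a)) := by
    rw [proj_sub, proj_sub, proj_sub, ht]
    abel
  have bound : vv v (extend σ a t - a) ≤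
      max (vv v (xq - a)) (max (vv v (xu - a)) (vv v (xw - a))) := by
    refine (vv_extend_sub v σ a t).trans ?_
    rw [ht2]
    refine (vv_add_le v _ _).trans
      (max_le_max (vv_proj_le v σ _) ?_)
    exact (vv_sub_le v _ _).trans (max_le_max (vv_proj_le v σ _) (vv_proj_le v σ _))
  rcases hB with rfl | rfl
  · exact lt_of_le_of_lt bound (max_lt hxq (max_lt hxu hxw))
  · exact le_trans bound (max_le hxq (max_le hxu hxw))

end Aux

/-- a family of risometries between the fibers of an exhibition,
compatible with composition and moving only in directions inside `Ū`, induces a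
risometry of the ball `B` by a fixed shift `δ` of the base point. -/
theorem translater_shift_is_risometry
    (v : Valuation K Γ) {n d : ℕ}
    (B : Set (Fin n → K)) (hB : IsBall v B)
    (Ubar : Submodule (Kbar v) (Fin n → Kbar v))
    (hdim : Module.finrank (Kbar v) Ubar = d)
    (σ : Fin d → Fin n) (hσ : IsExhibition v σ Ubar)
    (α : (Fin d → K) → (Fin d → K) → (Fin n → K) → (Fin n → K))
    (hαbij : ∀ q ∈ proj σ '' B, ∀ q' ∈ proj σ '' B,
      Set.BijOn (α q q') (B ∩ {x | proj σ x = q}) (B ∩ {x | proj σ x = q'}))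
    (hαriso : ∀ q ∈ proj σ '' B, ∀ q' ∈ proj σ '' B,
      ∀ z ∈ B ∩ {x | proj σ x = q}, ∀ z' ∈ B ∩ {x | proj σ x = q},
        rvEq v (α q q' z - α q q' z') (z - z'))
    (hαcoc : ∀ q ∈ proj σ '' B, ∀ q' ∈ proj σ '' B, ∀ q'' ∈ proj σ '' B,
      ∀ z ∈ B ∩ {x | proj σ x = q}, α q' q'' (α q q' z) = α q q'' z)
    (hαdir : ∀ q ∈ proj σ '' B, ∀ q' ∈ proj σ '' B, ∀ z ∈ B ∩ {x | proj σ x = q},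
      dirSet v (α q q' z - z) ⊆ (Ubar : Set (Fin n → Kbar v)))
    (δ : Fin d → K) (hδ : ∃ u ∈ proj σ '' B, ∃ w ∈ proj σ '' B, δ = u - w) :
    Set.BijOn (fun x => α (proj σ x) (proj σ x + δ) x) B B ∧
    ∀ x ∈ B, ∀ x' ∈ B,
      rvEq v (α (proj σ x) (proj σ x + δ) x - α (proj σ x') (proj σ x' + δ) x')
        (x - x') := by
  have hinj : Function.Injective σ := hσ.1.injective
  obtain ⟨u0, hu0, w0, hw0, hδeq⟩ := hδ
  have hmemP : ∀ x ∈ B, proj σ x ∈ proj σ '' B := fun x hx => ⟨x, hx, rfl⟩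
  have hplus : ∀ q ∈ proj σ '' B, q + δ ∈ proj σ '' B := by
    intro q hq
    have h1 := ball_closure v hB hinj hq hu0 hw0
    have h2 : q + δ = q + u0 - w0 := by rw [hδeq]; abel
    rwa [h2]
  have hminus : ∀ q ∈ proj σ '' B, q - δ ∈ proj σ '' B := by
    intro q hq
    have h1 := ball_closure v hB hinj hq hw0 hu0
    have h2 : q - δ = q + w0 - u0 := by rw [hδeq]; abel
    rwa [h2]
  have hfib : ∀ x ∈ B, x ∈ B ∩ {y | proj σ y = proj σ x} := fun x hx => ⟨hx, rfl⟩
  have hid : ∀ q ∈ proj σ '' B, ∀ z ∈ B ∩ {x | proj σ x = q}, α q q z = z := by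
    intro q hq z hz
    have h1 := hαcoc q hq q hq q hq z hz
    exact (hαbij q hq q hq).injOn ((hαbij q hq q hq).mapsTo hz) hz h1
  constructor
  · refine Set.InvOn.bijOn (f' := fun y => α (proj σ y) (proj σ y - δ) y) ⟨?_, ?_⟩ ?_ ?_
    · intro x hx
      have hq := hmemP x hx
      have hmf : α (proj σ x) (proj σ x + δ) x ∈ B ∩ {y | proj σ y = proj σ x + δ} :=
        (hαbij _ hq _ (hplus _ hq)).mapsTo (hfib x hx)
      show α (proj σ (α (proj σ x) (proj σ x + δ) x))
          (proj σ (α (proj σ x) (proj σ x + δ) x) - δ)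
          (α (proj σ x) (proj σ x + δ) x) = x
      have hcan : proj σ x + δ - δ = proj σ x := by abel
      rw [hmf.2, hcan, hαcoc _ hq _ (hplus _ hq) _ hq x (hfib x hx),
        hid _ hq x (hfib x hx)]
    · intro y hy
      have hq := hmemP y hy
      have hmg : α (proj σ y) (proj σ y - δ) y ∈ B ∩ {z | proj σ z = proj σ y - δ} :=
        (hαbij _ hq _ (hminus _ hq)).mapsTo (hfib y hy)
      show α (proj σ (α (proj σ y) (proj σ y - δ) y))
          (proj σ (α (proj σ y) (proj σ y - δ) y) + δ)
          (α (proj σ y) (proj σ y - δ) y) = y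
      have hcan : proj σ y - δ + δ = proj σ y := by abel
      rw [hmg.2, hcan, hαcoc _ hq _ (hminus _ hq) _ hq y (hfib y hy),
        hid _ hq y (hfib y hy)]
    · intro x hx
      exact ((hαbij _ (hmemP x hx) _ (hplus _ (hmemP x hx))).mapsTo (hfib x hx)).1
    · intro y hy
      exact ((hαbij _ (hmemP y hy) _ (hminus _ (hmemP y hy))).mapsTo (hfib y hy)).1
  · intro x hx x' hx'
    have hq : proj σ x ∈ proj σ '' B := hmemP x hx
    have hq' : proj σ x' ∈ proj σ '' B := hmemP x' hx'
    have hqδ := hplus _ hq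
    have hq'δ := hplus _ hq'
    set q := proj σ x with hqdef
    set q' := proj σ x' with hq'def
    set x'' := α q' q x' with hx''def
    have hx''m : x'' ∈ B ∩ {y | proj σ y = q} := (hαbij q' hq' q hq).mapsTo (hfib x' hx')
    set y := α q (q + δ) x with hydef
    have hym : y ∈ B ∩ {z | proj σ z = q + δ} := (hαbij q hq _ hqδ).mapsTo (hfib x hx)
    set y'' := α q (q + δ) x'' with hy''def
    have hy''m : y'' ∈ B ∩ {z | proj σ z = q + δ} := (hαbij q hq _ hqδ).mapsTo hx''m
    set y' := α q' (q' + δ) x' with hy'def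
    have hy'm : y' ∈ B ∩ {z | proj σ z = q' + δ} := (hαbij q' hq' _ hq'δ).mapsTo (hfib x' hx')
    have hriso : rvEq v (y - y'') (x - x'') :=
      hαriso q hq (q + δ) hqδ x (hfib x hx) x'' hx''m
    have hvyy'' : vv v (y - y'') = vv v (x - x'') := rvEq_vv v hriso
    have hdirb : dirSet v (x'' - x') ⊆ (Ubar : Set (Fin n → Kbar v)) :=
      hαdir q' hq' q hq x' (hfib x' hx')
    have hy''eq : y'' = α (q' + δ) (q + δ) y' := by
      have h1 := hαcoc q' hq' q hq (q + δ) hqδ x' (hfib x' hx')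
      have h2 := hαcoc q' hq' (q' + δ) hq'δ (q + δ) hqδ x' (hfib x' hx')
      rw [hy''def, hx''def, h1, ← h2, hy'def]
    have hdirb' : dirSet v (y'' - y') ⊆ (Ubar : Set (Fin n → Kbar v)) := by
      rw [hy''eq]
      exact hαdir (q' + δ) hq'δ (q + δ) hqδ y' hy'm
    have hpb : proj σ (x'' - x') = q - q' := by rw [proj_sub, hx''m.2, ← hq'def]
    have hpb' : proj σ (y'' - y') = q - q' := by
      rw [proj_sub, hy''m.2, hy'm.2]; abel
    have hvb : vv v (proj σ (x'' - x')) = vv v (x'' - x') := exhibition_vv_proj v hσ hdirb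
    have hvb'0 : vv v (proj σ (y'' - y')) = vv v (y'' - y') := exhibition_vv_proj v hσ hdirb'
    have hvbb' : vv v (y'' - y') = vv v (x'' - x') := by
      rw [← hvb'0, hpb', ← hpb, hvb]
    have hBB := exhibition_dir_diff v hσ hdirb hdirb' (hpb.trans hpb'.symm)
    have hpa : proj σ (x - x'') = 0 := by rw [proj_sub, hx''m.2, ← hqdef, sub_self]
    have hpa' : proj σ (y - y'') = 0 := by rw [proj_sub, hym.2, hy''m.2, sub_self]
    have hxx' : x - x' = (x - x'') + (x'' - x') := by abel
    have hyy' : y - y' = (y - y'') + (y'' - y') := by abel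
    have hmax' : vv v (y - y') = max (vv v (y - y'')) (vv v (y'' - y')) := by
      rw [hyy']; exact vv_add_eq_max v hpa' hvb'0
    have hdiff : (y - y') - (x - x') =
        ((y - y'') - (x - x'')) + ((y'' - y') - (x'' - x')) := by abel
    rcases eq_or_ne (max (vv v (x - x'')) (vv v (x'' - x'))) 0 with h0 | h0
    · right
      have hA : x - x'' = 0 :=
        (vv_eq_zero v).mp (le_antisymm ((le_max_left _ _).trans h0.le) zero_le')
      have hBz : x'' - x' = 0 :=
        (vv_eq_zero v).mp (le_antisymm ((le_max_right _ _).trans h0.le) zero_le')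
      have hA' : y - y'' = 0 := by
        rcases hriso with h | h
        · rw [hA, sub_zero] at h; exact absurd h (lt_irrefl _)
        · exact h.1
      have hB' : y'' - y' = 0 := (vv_eq_zero v).mp (by rw [hvbb', hBz, vv_zero])
      constructor
      · rw [hyy', hA', hB', add_zero]
      · rw [hxx', hA, hBz, add_zero]
    · left
      have hpos : (0 : Γ) < max (vv v (x - x'')) (vv v (x'' - x')) :=
        lt_of_le_of_ne zero_le' (Ne.symm h0)
      have hyval : vv v (y - y') = max (vv v (x - x'')) (vv v (x'' - x')) := by
        rw [hmax', hvyy'', hvbb']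
      rw [hyval]
      calc vv v ((y - y') - (x - x'))
          = vv v (((y - y'') - (x - x'')) + ((y'' - y') - (x'' - x'))) := by rw [hdiff]
        _ ≤ max (vv v ((y - y'') - (x - x''))) (vv v ((y'' - y') - (x'' - x'))) :=
            vv_add_le v _ _
        _ < max (vv v (x - x'')) (vv v (x'' - x')) := by
            apply max_lt
            · rcases hriso with h | h
              · exact lt_of_lt_of_le (h.trans_eq hvyy'') (le_max_left _ _)
              · have hz : (y - y'') - (x - x'') = 0 := by rw [h.1, h.2, sub_zero]
                rw [hz, vv_zero]
                exact hpos
            · rcases hBB with h | h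
              · have hz : (y'' - y') - (x'' - x') = 0 := by rw [h, sub_self]
                rw [hz, vv_zero]
                exact hpos
              · have hneg : vv v ((y'' - y') - (x'' - x')) =
                    vv v ((x'' - x') - (y'' - y')) := by
                  rw [← vv_neg v, neg_sub]
                rw [hneg]
                exact lt_of_lt_of_le h (le_max_right _ _)


end
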